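/- For every integer p ≥ 3, the fixed points in [0,1] of the map g_p(x) = 1 - (1 - x^{p-1})^{p-1} are exactly 0, 1, and α_p, where α_p is the unique root of x^{p-1}+x-1=0 in [0,1]. -/

import Mathlib

theorem stmt_4 (p : ℕ) (hp : 3 ≤ p) (α : ℝ) (hα : α ∈ Set.Icc (0:ℝ) 1)
    (hroot : α ^ (p - 1) + α - 1 = 0) :
    ∀ x ∈ Set.Icc (0:ℝ) 1,
      (1 - (1 - x ^ (p - 1)) ^ (p - 1) = x ↔ x = 0 ∨ x = 1 ∨ x = α) := by
  intro x hx
  obtain ⟨hx0, hx1⟩ := hx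
  obtain ⟨hα0, hα1⟩ := hα
  set n := p - 1 with hn
  have hn2 : 2 ≤ n := by omega
  have hnne : n ≠ 0 := by omega
  have hαn : α ^ n = 1 - α := by linarith
  have hα0' : 0 < α := by
    rcases lt_or_eq_of_le hα0 with h | h
    · exact h
    · exfalso; rw [← h] at hroot; simp [zero_pow hnne] at hroot
  have hα1' : α < 1 := by
    rcases lt_or_eq_of_le hα1 with h | h
    · exact h
    · exfalso; rw [h] at hroot; norm_num at hroot
  constructor
  · intro hfix
    by_contra hcon
    push_neg at hcon
    obtain ⟨hxne0, hxne1, hxneα⟩ := hcon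
    have hx0' : 0 < x := lt_of_le_of_ne hx0 (Ne.symm hxne0)
    have hx1' : x < 1 := lt_of_le_of_ne hx1 hxne1
    set h : ℝ → ℝ := fun t => 1 - t - (1 - t ^ n) ^ n with hh
    have hcont : Continuous h := by
      exact (continuous_const.sub continuous_id).sub
        ((continuous_const.sub (continuous_pow n)).pow n)
    have hderiv : ∀ t : ℝ, HasDerivAt h
        (-1 + (n : ℝ) ^ 2 * (t * (1 - t ^ n)) ^ (n - 1)) t := by
      intro t
      have h1 : HasDerivAt (fun t : ℝ => t ^ n) ((n : ℝ) * t ^ (n - 1)) t :=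
        hasDerivAt_pow n t
      have h2 : HasDerivAt (fun t : ℝ => 1 - t ^ n) (-((n : ℝ) * t ^ (n - 1))) t := by
        exact h1.const_sub 1
      have h3 : HasDerivAt (fun t : ℝ => (1 - t ^ n) ^ n)
          ((n : ℝ) * (1 - t ^ n) ^ (n - 1) * -((n : ℝ) * t ^ (n - 1))) t := h2.pow n
      have h4 : HasDerivAt (fun t : ℝ => 1 - t - (1 - t ^ n) ^ n) _ t := ((hasDerivAt_const t (1 : ℝ)).sub (hasDerivAt_id t)).sub h3
      convert h4 using 1
      rw [mul_pow]
      ring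
    have hdiff : ∀ t : ℝ, DifferentiableAt ℝ h t := fun t => (hderiv t).differentiableAt
    -- the four zeros of h
    have hz0 : h 0 = 0 := by simp [hh, zero_pow hnne]
    have hz1 : h 1 = 0 := by simp [hh, zero_pow hnne]
    have hzx : h x = 0 := by simp only [hh]; linarith
    have hzα : h α = 0 := by
      simp only [hh, hαn]
      have : (1 : ℝ) - (1 - α) = α := by ring
      rw [this, hαn]; ring
    -- order the interior zeros
    obtain ⟨a, b, ha0, hab, hb1, hza, hzb⟩ :
        ∃ a b : ℝ, 0 < a ∧ a < b ∧ b < 1 ∧ h a = 0 ∧ h b = 0 := by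
      rcases lt_or_gt_of_ne hxneα with hlt | hlt
      · exact ⟨x, α, hx0', hlt, hα1', hzx, hzα⟩
      · exact ⟨α, x, hα0', hlt, hx1', hzα, hzx⟩
    -- Rolle three times on h
    obtain ⟨c1, hc1, hdc1⟩ := exists_deriv_eq_zero (f := h) ha0 (hcont.continuousOn)
      (by rw [hz0, hza])
    obtain ⟨c2, hc2, hdc2⟩ := exists_deriv_eq_zero (f := h) hab (hcont.continuousOn)
      (by rw [hza, hzb])
    obtain ⟨c3, hc3, hdc3⟩ := exists_deriv_eq_zero (f := h) hb1 (hcont.continuousOn)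
      (by rw [hzb, hz1])
    have key : ∀ c : ℝ, 0 < c → c < 1 → deriv h c = 0 →
        (c - c ^ (n + 1)) ^ (n - 1) = ((n : ℝ) ^ 2)⁻¹ := by
      intro c hc0 hc1' hdc
      have hd := (hderiv c).deriv
      rw [hdc] at hd
      have hn0 : (0 : ℝ) < (n : ℝ) ^ 2 := by positivity
      have heq : (n : ℝ) ^ 2 * (c * (1 - c ^ n)) ^ (n - 1) = 1 := by linarith
      have : (c * (1 - c ^ n)) ^ (n - 1) = ((n : ℝ) ^ 2)⁻¹ := by
        field_simp at heq ⊢; linarith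
      rw [← this]
      congr 1
      ring
    have hcc : ∀ c ∈ Set.Ioo (0:ℝ) 1, (0:ℝ) ≤ c - c ^ (n + 1) := by
      intro c hc
      have h1 : c ^ (n + 1) ≤ c ^ 1 := by
        apply pow_le_pow_of_le_one (le_of_lt hc.1) (le_of_lt hc.2)
        omega
      have h2 : c ^ (n + 1) ≤ c := by simpa using h1
      linarith
    have hc1' : c1 ∈ Set.Ioo (0:ℝ) 1 := ⟨hc1.1, lt_trans hc1.2 (lt_trans hab hb1)⟩
    have hc2' : c2 ∈ Set.Ioo (0:ℝ) 1 := ⟨lt_trans ha0 hc2.1, lt_trans hc2.2 hb1⟩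
    have hc3' : c3 ∈ Set.Ioo (0:ℝ) 1 := ⟨lt_trans (lt_trans ha0 hab) hc3.1, hc3.2⟩
    have k1 := key c1 hc1'.1 hc1'.2 hdc1
    have k2 := key c2 hc2'.1 hc2'.2 hdc2
    have k3 := key c3 hc3'.1 hc3'.2 hdc3
    -- equal φ values
    set φ : ℝ → ℝ := fun t => t - t ^ (n + 1) with hφ
    have hφcont : Continuous φ := continuous_id.sub (continuous_pow (n + 1))
    have hφeq12 : φ c1 = φ c2 := by
      have := k1.trans k2.symm
      exact (pow_left_inj₀ (n := n - 1) (hcc c1 hc1') (hcc c2 hc2') (by omega)).mp (by simpa [hφ] using this)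
    have hφeq23 : φ c2 = φ c3 := by
      have := k2.trans k3.symm
      exact (pow_left_inj₀ (n := n - 1) (hcc c2 hc2') (hcc c3 hc3') (by omega)).mp (by simpa [hφ] using this)
    -- Rolle twice on φ
    have hc12 : c1 < c2 := lt_trans hc1.2 hc2.1
    have hc23 : c2 < c3 := lt_trans hc2.2 hc3.1
    obtain ⟨d1, hd1, hdd1⟩ := exists_deriv_eq_zero (f := φ) hc12 hφcont.continuousOn hφeq12
    obtain ⟨d2, hd2, hdd2⟩ := exists_deriv_eq_zero (f := φ) hc23 hφcont.continuousOn hφeq23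
    have hφderiv : ∀ t : ℝ, HasDerivAt φ (1 - ((n : ℝ) + 1) * t ^ n) t := by
      intro t
      have := (hasDerivAt_id t).sub (hasDerivAt_pow (n + 1) t)
      simpa [Nat.add_sub_cancel] using (show HasDerivAt (fun t : ℝ => t - t ^ (n + 1)) _ t from this)
    have e1 : ((n : ℝ) + 1) * d1 ^ n = 1 := by
      have := (hφderiv d1).deriv; rw [hdd1] at this; linarith
    have e2 : ((n : ℝ) + 1) * d2 ^ n = 1 := by
      have := (hφderiv d2).deriv; rw [hdd2] at this; linarith
    have hd12 : d1 < d2 := lt_trans hd1.2 hd2.1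
    have hd10 : 0 < d1 := lt_trans hc1'.1 hd1.1
    have hlt : d1 ^ n < d2 ^ n := pow_lt_pow_left₀ hd12 (le_of_lt hd10) hnne
    have hnpos : (0:ℝ) < (n : ℝ) + 1 := by positivity
    nlinarith
  · rintro (rfl | rfl | rfl)
    · simp [zero_pow hnne]
    · simp [zero_pow hnne]
    · rw [hαn, sub_sub_cancel, hαn]; ring
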